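/- The image of the set {(x,y) ∈ ℝ^{n+1} × ℝ^{n+1} : |x| = 1, ⟨x,y⟩ = 0, |y| < 1} under the map (x,y) ↦ [z₀ : ⋯ : zₙ : i√(2 − Σ|zₖ|²)] (where zₖ = xₖ + iyₖ) equals Qⁿ \ Q^{n−1}, where Qⁿ = {[z] ∈ ℂP^{n+1} : Σₖ₌₀^{n+1} zₖ² = 0} is the Fermat quadric and Q^{n−1} = Qⁿ ∩ {z_{n+1} = 0}. -/

import Mathlib

open scoped BigOperators

/-- Lift to `ℂ^{n+2}` of the map `(x,y) ↦ [z₀ : ⋯ : zₙ : i√(2 − Σ|zₖ|²)]`, `zₖ = xₖ + iyₖ`. -/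
noncomputable def uLift (n : ℕ) (x y : Fin (n + 1) → ℝ) : Fin (n + 2) → ℂ :=
  Fin.snoc (fun k => (x k : ℂ) + Complex.I * (y k : ℂ))
    (Complex.I * (Real.sqrt (2 - ∑ k, (x k ^ 2 + y k ^ 2)) : ℂ))

lemma sum_sq_aux (m : ℕ) (x y : Fin m → ℝ) :
    ∑ k, ((x k : ℂ) + Complex.I * y k)^2
      = ((∑ k, (x k^2 - y k^2) : ℝ) : ℂ) + Complex.I * ((∑ k, 2 * (x k * y k) : ℝ) : ℂ) := by
  push_cast
  rw [Finset.mul_sum, ← Finset.sum_add_distrib]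
  refine Finset.sum_congr rfl fun k _ => ?_
  linear_combination ((y k : ℂ)^2) * Complex.I_sq

/-- The image of the open unit cotangent disc bundle
`{(x,y) : |x| = 1, ⟨x,y⟩ = 0, |y| < 1}` under `(x,y) ↦ [z₀ : ⋯ : zₙ : i√(2 − Σ|zₖ|²)]`
is exactly `Qⁿ \ Q^{n−1}`, where `Qⁿ = {Σ zₖ² = 0} ⊂ ℂP^{n+1}` and
`Q^{n−1} = Qⁿ ∩ {z_{n+1} = 0}` (projective points are nonzero vectors up to scalar). -/
theorem stmt_2 (n : ℕ) :
    ∀ u : Fin (n + 2) → ℂ, u ≠ 0 →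
      ((∃ x y : Fin (n + 1) → ℝ,
          (∑ k, x k ^ 2) = 1 ∧ (∑ k, x k * y k) = 0 ∧ (∑ k, y k ^ 2) < 1 ∧
          ∃ c : ℂ, c ≠ 0 ∧ u = c • uLift n x y)
        ↔ ((∑ k, u k ^ 2) = 0 ∧ u (Fin.last (n + 1)) ≠ 0)) := by
  intro u hu
  constructor
  · rintro ⟨x, y, hx, hxy, hy, c, hc, rfl⟩
    have hT : (0:ℝ) < 1 - ∑ k, y k ^ 2 := by linarith
    have hS : (2 - ∑ k, (x k ^ 2 + y k ^ 2)) = 1 - ∑ k, y k ^ 2 := by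
      rw [Finset.sum_add_distrib, hx]; ring
    have hsqrt : Real.sqrt (2 - ∑ k, (x k ^ 2 + y k ^ 2)) ^ 2 = 1 - ∑ k, y k ^ 2 := by
      rw [Real.sq_sqrt (by rw [hS]; linarith), hS]
    constructor
    · have hcs : ∑ k, (c • uLift n x y) k ^ 2 = c^2 * ∑ k, uLift n x y k ^ 2 := by
        rw [Finset.mul_sum]
        exact Finset.sum_congr rfl fun k _ => by simp [Pi.smul_apply, smul_eq_mul]; ring
      rw [hcs]
      have h2 : ∑ k, uLift n x y k ^ 2 = 0 := by
        rw [Fin.sum_univ_castSucc]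
        simp only [uLift, Fin.snoc_castSucc, Fin.snoc_last]
        rw [sum_sq_aux]
        have hre : (∑ k, (x k ^ 2 - y k ^ 2)) = 1 - ∑ k, y k ^ 2 := by
          rw [Finset.sum_sub_distrib, hx]
        have him : (∑ k, 2 * (x k * y k)) = 0 := by
          have : (∑ k, 2 * (x k * y k)) = 2 * ∑ k, x k * y k := by
            rw [Finset.mul_sum]
          rw [this, hxy, mul_zero]
        rw [hre, him]
        have hIsq : (Complex.I * (Real.sqrt (2 - ∑ k, (x k ^ 2 + y k ^ 2)) : ℂ))^2
            = -((Real.sqrt (2 - ∑ k, (x k ^ 2 + y k ^ 2)) ^ 2 : ℝ) : ℂ) := by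
          push_cast
          linear_combination ((Real.sqrt (2 - ∑ k, (x k ^ 2 + y k ^ 2)) : ℂ)^2) * Complex.I_sq
        rw [hIsq, hsqrt]
        push_cast
        ring
      rw [h2, mul_zero]
    · have hl : (c • uLift n x y) (Fin.last (n+1))
          = c * (Complex.I * (Real.sqrt (2 - ∑ k, (x k ^ 2 + y k ^ 2)) : ℂ)) := by
        simp [uLift, Fin.snoc_last]
      rw [hl]
      have hpos : Real.sqrt (2 - ∑ k, (x k ^ 2 + y k ^ 2)) ≠ 0 := by
        refine ne_of_gt (Real.sqrt_pos.mpr ?_)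
        rw [hS]; linarith
      simp [hc, Complex.I_ne_zero, Complex.ofReal_ne_zero, hpos]
  · rintro ⟨h1, h2⟩
    set a : ℂ := u (Fin.last (n+1)) with ha
    set w : Fin (n+1) → ℂ := fun k => u k.castSucc with hw
    have hsum : ∑ k, w k ^ 2 = -a^2 := by
      have h1' := h1
      rw [Fin.sum_univ_castSucc] at h1'
      linear_combination h1'
    set A : ℝ := Complex.normSq a with hA
    set W : ℝ := ∑ k, Complex.normSq (w k) with hW
    have hApos : 0 < A := Complex.normSq_pos.mpr h2
    have hWnn : 0 ≤ W := Finset.sum_nonneg fun k _ => Complex.normSq_nonneg _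
    have hWA : 0 < W + A := by linarith
    set s : ℝ := Real.sqrt (2 * A / (W + A)) with hs
    have hs2 : s ^ 2 = 2 * A / (W + A) := Real.sq_sqrt (by positivity)
    have hspos : 0 < s := Real.sqrt_pos.mpr (by positivity)
    set c : ℂ := a / (Complex.I * s) with hc
    have hsC : (s:ℂ) ≠ 0 := Complex.ofReal_ne_zero.mpr hspos.ne'
    have hIs : Complex.I * (s:ℂ) ≠ 0 := mul_ne_zero Complex.I_ne_zero hsC
    have hcne : c ≠ 0 := div_ne_zero h2 hIs
    have hca : c * (Complex.I * (s:ℂ)) = a := div_mul_cancel₀ _ hIs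
    have hc2 : c ^ 2 * (s:ℂ)^2 = -a^2 := by
      linear_combination (-(c * (Complex.I * (s:ℂ)) + a)) * hca
        + c^2 * (s:ℂ)^2 * Complex.I_sq
    set d : Fin (n+1) → ℂ := fun k => w k / c with hd
    have hdsum : ∑ k, d k ^ 2 = ((s:ℂ))^2 := by
      have hq : ∑ k, d k ^ 2 = (∑ k, w k ^ 2) / c^2 := by
        rw [Finset.sum_div]
        exact Finset.sum_congr rfl fun k _ => by rw [hd]; ring
      rw [hq, hsum]
      field_simp
      linear_combination -hc2
    set x : Fin (n+1) → ℝ := fun k => (d k).re with hx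
    set y : Fin (n+1) → ℝ := fun k => (d k).im with hy
    have hrecomp : ∀ k, ((x k : ℂ) + Complex.I * y k) = d k := by
      intro k
      rw [hx, hy]
      simp [Complex.ext_iff]
    have hdsum' : ((∑ k, (x k^2 - y k^2) : ℝ) : ℂ)
        + Complex.I * ((∑ k, 2 * (x k * y k) : ℝ) : ℂ) = ((s^2 : ℝ) : ℂ) := by
      rw [← sum_sq_aux]
      rw [Finset.sum_congr rfl fun k _ => by rw [hrecomp k]]
      rw [hdsum]
      push_cast
      ring
    have hre : (∑ k, (x k ^ 2 - y k ^ 2)) = s^2 := by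
      have h := congrArg Complex.re hdsum'
      simp only [Complex.add_re, Complex.ofReal_re, Complex.mul_re, Complex.I_re,
        Complex.I_im, Complex.ofReal_im, zero_mul, one_mul, mul_zero, sub_zero,
        zero_sub, add_zero, mul_one, neg_zero] at h
      linarith
    have him : (∑ k, (x k * y k)) = 0 := by
      have h := congrArg Complex.im hdsum'
      simp only [Complex.add_im, Complex.ofReal_im, Complex.mul_im, Complex.I_re,
        Complex.I_im, Complex.ofReal_re, zero_mul, one_mul, mul_zero, sub_zero,
        zero_sub, add_zero, zero_add, mul_one, neg_zero] at h
      have h2' : (2:ℝ) * ∑ k, (x k * y k) = 0 := by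
        rw [Finset.mul_sum]
        rw [← h]
      linarith
    have hnormc : Complex.normSq c = A / s^2 := by
      rw [hc, Complex.normSq_div, Complex.normSq_mul, Complex.normSq_I]
      simp [Complex.normSq_ofReal]
      ring
    have hsumnorm : ∑ k, (x k ^ 2 + y k ^ 2) = 2 - s^2 := by
      have h3 : ∑ k, (x k ^ 2 + y k ^ 2) = ∑ k, Complex.normSq (d k) := by
        refine Finset.sum_congr rfl fun k _ => ?_
        rw [Complex.normSq_apply, hx, hy]; ring
      have h4 : ∑ k, Complex.normSq (d k) = W / Complex.normSq c := by
        rw [hW, Finset.sum_div]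
        refine Finset.sum_congr rfl fun k _ => ?_
        rw [hd, Complex.normSq_div]
      rw [h3, h4, hnormc, hs2]
      have hs2ne : (2:ℝ) * A / (W + A) ≠ 0 := by positivity
      field_simp
      ring
    have hxsum : (∑ k, x k ^ 2) = 1 := by
      have h5 : ∑ k, (x k^2 - y k^2) = ∑ k, x k^2 - ∑ k, y k^2 := Finset.sum_sub_distrib _ _
      have h6 : ∑ k, (x k^2 + y k^2) = ∑ k, x k^2 + ∑ k, y k^2 := Finset.sum_add_distrib
      rw [h5] at hre
      rw [h6] at hsumnorm
      linarith
    have hysum : (∑ k, y k ^ 2) < 1 := by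
      have h5 : ∑ k, (x k^2 - y k^2) = ∑ k, x k^2 - ∑ k, y k^2 := Finset.sum_sub_distrib _ _
      rw [h5, hxsum] at hre
      nlinarith [hspos, sq_nonneg s]
    refine ⟨x, y, hxsum, him, hysum, c, hcne, ?_⟩
    funext k
    refine Fin.lastCases ?_ ?_ k
    · have hsq : 2 - ∑ k, (x k ^ 2 + y k ^ 2) = s^2 := by rw [hsumnorm]; ring
      have hrt : Real.sqrt (2 - ∑ k, (x k ^ 2 + y k ^ 2)) = s := by
        rw [hsq]; exact Real.sqrt_sq hspos.le
      simp only [Pi.smul_apply, smul_eq_mul, uLift, Fin.snoc_last, hrt]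
      rw [← ha, ← hca]
    · intro i
      simp only [Pi.smul_apply, smul_eq_mul, uLift, Fin.snoc_castSucc]
      symm
      calc c * ((x i : ℂ) + Complex.I * y i) = c * d i := by rw [hrecomp i]
        _ = w i := by rw [hd]; field_simp
        _ = u i.castSucc := rfl
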